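/- Let N ∈ ℕ*, σ > 0, and W be a symmetric N×N random matrix whose entries on and above the diagonal are i.i.d. N(0, σ²). Let B_{T,N} be its generalised matrix of moments (with u = (1,...,1)^T, B_{T,N}(l₁,l₂) = E[u^T W^{l₁+l₂} u]). Then for all l₁, l₂ ∈ {0,...,T-1}: B_{T,N}(l₁,l₂) ≤ (1/σ²) · (1/((l₁+l₂)/(N(N+1)/2) + 1)) · B_{T,N}(l₁+1, l₂+1). -/

import Mathlib

open MeasureTheory ProbabilityTheory Matrix Real Filter
open scoped ENNReal NNReal

namespace Stmt11Aux

lemma integrable_pow_gauss {b : ℝ} (hb : 0 < b) (n : ℕ) :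
    Integrable fun x : ℝ => x ^ n * Real.exp (-b * x ^ 2) := by
  have hC : ∀ x : ℝ, |x ^ n * Real.exp (-b * x ^ 2)| ≤
      ((2 / b) ^ n * n.factorial + 1) * Real.exp (-(b / 2) * x ^ 2) := by
    intro x
    rw [abs_mul, abs_of_nonneg (Real.exp_pos _).le, abs_pow]
    have hxn : |x| ^ n ≤ 1 + (2 / b) ^ n * n.factorial * Real.exp ((b / 2) * x ^ 2) := by
      rcases le_total (|x|) 1 with h | h
      · have : |x| ^ n ≤ 1 := pow_le_one₀ (abs_nonneg x) h
        nlinarith [mul_nonneg (mul_nonneg (pow_nonneg (by positivity : (0:ℝ) ≤ 2 / b) n)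
            (Nat.cast_nonneg n.factorial)) (Real.exp_pos ((b/2) * x^2)).le]
      · -- |x| ≥ 1 : |x|^n ≤ x^(2n)·... use (b/2 x²)^n ≤ n! exp(b/2 x²)
        have h1 : ((b / 2) * x ^ 2) ^ n / n.factorial ≤ Real.exp ((b / 2) * x ^ 2) := by
          have h0 : (0:ℝ) ≤ (b / 2) * x ^ 2 := by positivity
          calc ((b / 2) * x ^ 2) ^ n / n.factorial
              ≤ ∑ i ∈ Finset.range (n + 1), ((b / 2) * x ^ 2) ^ i / i.factorial := by
                refine Finset.single_le_sum (f := fun i => ((b/2) * x^2)^i / i.factorial) ?_ ?_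
                · intro i _; positivity
                · simp
            _ ≤ Real.exp ((b / 2) * x ^ 2) := Real.sum_le_exp_of_nonneg h0 _
        have h2 : |x| ^ n ≤ (x ^ 2) ^ n := by
          calc |x| ^ n ≤ (|x| ^ 2) ^ n := by
                apply pow_le_pow_left₀ (abs_nonneg x)
                nlinarith
            _ = (x ^ 2) ^ n := by rw [sq_abs]
        have h3 : (x ^ 2) ^ n = (2 / b) ^ n * ((b / 2) * x ^ 2) ^ n := by
          rw [mul_pow, ← mul_assoc, ← mul_pow]
          field_simp
          simp
        have h4 : ((b / 2) * x ^ 2) ^ n ≤ n.factorial * Real.exp ((b / 2) * x ^ 2) := by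
          rw [div_le_iff₀ (by positivity : (0:ℝ) < n.factorial)] at h1
          linarith [h1]
        calc |x| ^ n ≤ (x ^ 2) ^ n := h2
          _ = (2 / b) ^ n * ((b / 2) * x ^ 2) ^ n := h3
          _ ≤ (2 / b) ^ n * (n.factorial * Real.exp ((b / 2) * x ^ 2)) := by
              apply mul_le_mul_of_nonneg_left h4 (by positivity)
          _ ≤ 1 + (2 / b) ^ n * n.factorial * Real.exp ((b / 2) * x ^ 2) := by
              rw [mul_assoc] at *
              linarith
    calc |x| ^ n * Real.exp (-b * x ^ 2)
        ≤ (1 + (2 / b) ^ n * n.factorial * Real.exp ((b / 2) * x ^ 2)) *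
            Real.exp (-b * x ^ 2) := by
          apply mul_le_mul_of_nonneg_right hxn (Real.exp_pos _).le
      _ = Real.exp (-b * x ^ 2) + (2 / b) ^ n * n.factorial *
            (Real.exp ((b / 2) * x ^ 2) * Real.exp (-b * x ^ 2)) := by ring
      _ ≤ Real.exp (-(b / 2) * x ^ 2) + (2 / b) ^ n * n.factorial *
            Real.exp (-(b / 2) * x ^ 2) := by
          have e1 : Real.exp (-b * x ^ 2) ≤ Real.exp (-(b / 2) * x ^ 2) := by
            apply Real.exp_le_exp.2; nlinarith [sq_nonneg x]
          have e2 : Real.exp ((b / 2) * x ^ 2) * Real.exp (-b * x ^ 2)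
              = Real.exp (-(b / 2) * x ^ 2) := by
            rw [← Real.exp_add]; ring_nf
          rw [e2]
          have : (0:ℝ) ≤ (2 / b) ^ n * n.factorial := by positivity
          linarith
      _ = ((2 / b) ^ n * n.factorial + 1) * Real.exp (-(b / 2) * x ^ 2) := by ring
  refine Integrable.mono' ((integrable_exp_neg_mul_sq (by positivity : (0:ℝ) < b / 2)).const_mul
    ((2 / b) ^ n * n.factorial + 1)) ?_ (Filter.Eventually.of_forall fun x => ?_)
  · exact ((continuous_pow n).mul (by continuity)).aestronglyMeasurable
  · rw [Real.norm_eq_abs]; exact hC x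


lemma gauss_ibp {b : ℝ} (hb : 0 < b) (n : ℕ) :
    (2 * b) * ∫ x : ℝ, x ^ (n + 2) * Real.exp (-b * x ^ 2)
      = (n + 1) * ∫ x : ℝ, x ^ n * Real.exp (-b * x ^ 2) := by
  have hderiv : ∀ x : ℝ, HasDerivAt (fun x : ℝ => x ^ (n + 1) * Real.exp (-b * x ^ 2))
      (((n : ℝ) + 1) * (x ^ n * Real.exp (-b * x ^ 2))
        - (2 * b) * (x ^ (n + 2) * Real.exp (-b * x ^ 2))) x := by
    intro x
    have h1 : HasDerivAt (fun x : ℝ => x ^ (n + 1)) ((n + 1) * x ^ n) x := by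
      simpa using hasDerivAt_pow (n + 1) x
    have h2 : HasDerivAt (fun x : ℝ => Real.exp (-b * x ^ 2))
        (Real.exp (-b * x ^ 2) * (-b * (2 * x))) x := by
      have h3 : HasDerivAt (fun x : ℝ => -b * x ^ 2) (-b * (2 * x)) x := by
        simpa using ((hasDerivAt_pow 2 x).const_mul (-b))
      exact h3.exp
    have : HasDerivAt (fun x : ℝ => x ^ (n + 1) * Real.exp (-b * x ^ 2)) _ x := h1.mul h2
    convert this using 1
    ring
  have I1 := (integrable_pow_gauss hb n).const_mul ((n : ℝ) + 1)
  have I2 := (integrable_pow_gauss hb (n + 2)).const_mul (2 * b)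
  have hint : ∫ x : ℝ, (((n : ℝ) + 1) * (x ^ n * Real.exp (-b * x ^ 2))
      - (2 * b) * (x ^ (n + 2) * Real.exp (-b * x ^ 2))) = 0 :=
    integral_eq_zero_of_hasDerivAt_of_integrable hderiv (I1.sub I2)
      (integrable_pow_gauss hb (n + 1))
  rw [integral_sub I1 I2, integral_const_mul, integral_const_mul] at hint
  linarith

lemma gauss_odd (b : ℝ) (n : ℕ) (hn : Odd n) :
    ∫ x : ℝ, x ^ n * Real.exp (-b * x ^ 2) = 0 := by
  have h : (∫ x : ℝ, (-x) ^ n * Real.exp (-b * (-x) ^ 2))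
      = ∫ x : ℝ, x ^ n * Real.exp (-b * x ^ 2) :=
    integral_neg_eq_self (fun x : ℝ => x ^ n * Real.exp (-b * x ^ 2)) volume
  have h2 : ∀ x : ℝ, (-x) ^ n * Real.exp (-b * (-x) ^ 2)
      = -(x ^ n * Real.exp (-b * x ^ 2)) := by
    intro x
    rw [hn.neg_pow, neg_sq]
    ring
  simp_rw [h2] at h
  rw [integral_neg] at h
  linarith


variable {v : ℝ}

noncomputable def Mo (v : ℝ) (n : ℕ) : ℝ := ∫ x : ℝ, x ^ n ∂(gaussianReal 0 v.toNNReal)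

lemma gauss_density_integral (hv : 0 < v) (g : ℝ → ℝ) :
    ∫ x, g x ∂(gaussianReal 0 v.toNNReal)
      = ∫ x, gaussianPDFReal 0 v.toNNReal x * g x := by
  have hv' : v.toNNReal ≠ 0 := by
    simp only [ne_eq, Real.toNNReal_eq_zero, not_le]
    exact hv
  rw [gaussianReal_of_var_ne_zero 0 hv']
  have hd : (gaussianPDF 0 v.toNNReal)
      = fun x => ((gaussianPDFReal 0 v.toNNReal x).toNNReal : ℝ≥0∞) := by
    ext x
    rfl
  rw [hd, integral_withDensity_eq_integral_smul
    (measurable_gaussianPDFReal 0 v.toNNReal).real_toNNReal g]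
  congr 1
  ext x
  simp only [NNReal.smul_def, Real.coe_toNNReal _ (gaussianPDFReal_nonneg 0 _ x), smul_eq_mul]

lemma gauss_integrable_iff (hv : 0 < v) (g : ℝ → ℝ) (hg : Measurable g) :
    Integrable g (gaussianReal 0 v.toNNReal)
      ↔ Integrable (fun x => gaussianPDFReal 0 v.toNNReal x * g x) := by
  have hv' : v.toNNReal ≠ 0 := by
    simp only [ne_eq, Real.toNNReal_eq_zero, not_le]
    exact hv
  rw [gaussianReal_of_var_ne_zero 0 hv']
  have hd : (gaussianPDF 0 v.toNNReal)
      = fun x => ((gaussianPDFReal 0 v.toNNReal x).toNNReal : ℝ≥0∞) := by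
    ext x
    rfl
  rw [hd, integrable_withDensity_iff_integrable_smul
    (measurable_gaussianPDFReal 0 v.toNNReal).real_toNNReal]
  constructor <;> intro h <;> refine h.congr (Filter.Eventually.of_forall fun x => ?_) <;>
    simp only [NNReal.smul_def, Real.coe_toNNReal _ (gaussianPDFReal_nonneg 0 _ x), smul_eq_mul]

lemma pdfReal_eq (hv : 0 < v) (x : ℝ) :
    gaussianPDFReal 0 v.toNNReal x
      = (Real.sqrt (2 * Real.pi * v))⁻¹ * Real.exp (-(2 * v)⁻¹ * x ^ 2) := by
  rw [gaussianPDFReal]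
  rw [Real.coe_toNNReal _ hv.le]
  congr 1
  rw [sub_zero]
  congr 1
  field_simp

lemma Mo_eq (hv : 0 < v) (n : ℕ) :
    Mo v n = (Real.sqrt (2 * Real.pi * v))⁻¹
      * ∫ x : ℝ, x ^ n * Real.exp (-(2 * v)⁻¹ * x ^ 2) := by
  rw [Mo, gauss_density_integral hv]
  rw [← integral_const_mul]
  congr 1
  ext x
  simp only [pdfReal_eq hv]
  ring

lemma Mo_integrable (hv : 0 < v) (n : ℕ) :
    Integrable (fun x => x ^ n) (gaussianReal 0 v.toNNReal) := by
  rw [gauss_integrable_iff hv _ (measurable_id'.pow_const n)]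
  have hb : (0:ℝ) < (2 * v)⁻¹ := by positivity
  refine ((integrable_pow_gauss hb n).const_mul
    ((Real.sqrt (2 * Real.pi * v))⁻¹)).congr (Filter.Eventually.of_forall fun x => ?_)
  simp only [pdfReal_eq hv]
  ring

lemma Mo_nonneg (hv : 0 < v) (n : ℕ) : 0 ≤ Mo v n := by
  rcases Nat.even_or_odd n with he | ho
  · rw [Mo]
    apply integral_nonneg
    intro x
    exact he.pow_nonneg x
  · rw [Mo_eq hv, gauss_odd _ _ ho, mul_zero]

lemma Mo_zero (hv : 0 < v) : Mo v 0 = 1 := by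
  rw [Mo]
  simp

lemma Mo_rec (hv : 0 < v) (n : ℕ) : Mo v (n + 2) = ((n : ℝ) + 1) * v * Mo v n := by
  have hb : (0:ℝ) < (2 * v)⁻¹ := by positivity
  have h := gauss_ibp hb n
  have h2 : (2 : ℝ) * (2 * v)⁻¹ = v⁻¹ := by
    field_simp
  rw [h2] at h
  rw [Mo_eq hv, Mo_eq hv]
  have hI : ∫ x : ℝ, x ^ (n + 2) * Real.exp (-(2 * v)⁻¹ * x ^ 2)
      = ((n : ℝ) + 1) * v * ∫ x : ℝ, x ^ n * Real.exp (-(2 * v)⁻¹ * x ^ 2) := by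
    have hv0 : v ≠ 0 := ne_of_gt hv
    field_simp at h ⊢
    linarith [h]
  rw [hI]
  ring


/-! ### Combinatorial setup -/

abbrev EI (N : ℕ) := {p : Fin N × Fin N // p.1 ≤ p.2}

variable (N : ℕ)

def edg (i j : Fin N) : EI N :=
  if h : i ≤ j then ⟨(i, j), h⟩ else ⟨(j, i), le_of_not_ge h⟩

lemma edg_symm (i j : Fin N) : edg N i j = edg N j i := by
  unfold edg
  rcases le_or_gt i j with h | h
  · rcases eq_or_lt_of_le h with rfl | h'
    · simp
    · rw [dif_pos h, dif_neg (not_le_of_gt h')]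
  · rw [dif_neg (not_le_of_gt h), dif_pos h.le]

lemma card_EI : 2 * Fintype.card (EI N) = N * (N + 1) := by
  have h1 : Fintype.card (EI N) = Fintype.card (Sym2 (Fin N)) :=
    (Fintype.card_congr Sym2.sortEquiv).symm
  rw [h1, Sym2.card]
  simp only [Fintype.card_fin]
  rw [Nat.choose_two_right]
  have h2 : (N + 1) * (N + 1 - 1) = N * (N + 1) := by
    simp [Nat.mul_comm]
  rw [h2, Nat.two_mul_div_two_of_even]
  exact Nat.even_mul_succ_self N

def Mm (x : EI N → ℝ) : Matrix (Fin N) (Fin N) ℝ := fun i j => x (edg N i j)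

lemma Mm_continuous (L : ℕ) (w : Fin N → ℝ) (i : Fin N) :
    Continuous fun x : EI N → ℝ => (((Mm N x) ^ L) *ᵥ w) i := by
  induction L generalizing i with
  | zero => simpa using continuous_const
  | succ L ih =>
    have h : ∀ x : EI N → ℝ, (((Mm N x) ^ (L + 1)) *ᵥ w) i
        = ∑ j, x (edg N i j) * (((Mm N x) ^ L) *ᵥ w) j := by
      intro x
      rw [pow_succ', ← Matrix.mulVec_mulVec]
      rfl
    simp only [h]
    exact continuous_finset_sum _ fun j _ =>
      (continuous_apply (edg N i j)).mul (ih j)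

/-- vertices of a walk, with clamping -/
def vtx (L : ℕ) (p : Fin (L + 1) → Fin N) (j : ℕ) : Fin N :=
  p ⟨min j L, Nat.lt_succ_of_le (Nat.min_le_right j L)⟩

lemma vtx_eq (L : ℕ) (p : Fin (L + 1) → Fin N) (j : ℕ) (hj : j ≤ L) :
    vtx N L p j = p ⟨j, by omega⟩ := by
  unfold vtx
  congr 1
  exact Fin.ext (Nat.min_eq_left hj)

def ed (L : ℕ) (p : Fin (L + 1) → Fin N) (k : ℕ) : EI N :=
  edg N (vtx N L p k) (vtx N L p (k + 1))

def mult (L : ℕ) (p : Fin (L + 1) → Fin N) (e : EI N) : ℕ :=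
  ∑ k ∈ Finset.range L, if ed N L p k = e then 1 else 0

noncomputable def tm (v : ℝ) (L : ℕ) (p : Fin (L + 1) → Fin N) : ℝ :=
  ∏ e : EI N, Mo v (mult N L p e)

lemma tm_nonneg (hv : 0 < v) (L : ℕ) (p : Fin (L + 1) → Fin N) : 0 ≤ tm N v L p :=
  Finset.prod_nonneg fun e _ => Mo_nonneg hv _

lemma sum_mult (L : ℕ) (p : Fin (L + 1) → Fin N) : ∑ e : EI N, mult N L p e = L := by
  unfold mult
  rw [Finset.sum_comm]
  have h : ∀ k, ∑ e : EI N, (if ed N L p k = e then 1 else 0) = 1 := by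
    intro k
    rw [Finset.sum_ite_eq Finset.univ (ed N L p k) (fun _ => 1)]
    simp
  simp [h]

lemma prod_count {α : Type*} [Fintype α] [DecidableEq α] (f : α → ℝ) (g : ℕ → α) (L : ℕ) :
    ∏ k ∈ Finset.range L, f (g k)
      = ∏ a : α, f a ^ (∑ k ∈ Finset.range L, if g k = a then 1 else 0) := by
  induction L with
  | zero => simp
  | succ L ih =>
    rw [Finset.prod_range_succ, ih]
    have h : ∀ a : α, f a ^ (∑ k ∈ Finset.range (L+1), if g k = a then 1 else 0)
        = f a ^ (∑ k ∈ Finset.range L, if g k = a then 1 else 0)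
          * (if g L = a then f a else 1) := by
      intro a
      rw [Finset.sum_range_succ, pow_add]
      congr 1
      split <;> simp
    simp only [h]
    rw [Finset.prod_mul_distrib]
    congr 1
    rw [Finset.prod_ite_eq Finset.univ (g L) (fun a => f a)]
    simp

lemma wt_eq_monomial (L : ℕ) (p : Fin (L + 1) → Fin N) (x : EI N → ℝ) :
    ∏ k ∈ Finset.range L, x (ed N L p k) = ∏ e : EI N, x e ^ (mult N L p e) :=
  prod_count (fun e => x e) (fun k => ed N L p k) L


def snocE (L : ℕ) : ((Fin (L + 1) → Fin N) × Fin N) ≃ (Fin (L + 2) → Fin N) where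
  toFun pj := Fin.snoc pj.1 pj.2
  invFun q := (Fin.init q, q (Fin.last (L + 1)))
  left_inv := by
    rintro ⟨p, j⟩
    simp [Fin.init_snoc, Fin.snoc_last]
  right_inv := by
    intro q
    simp [Fin.snoc_init_self]

lemma vtx_snoc (L : ℕ) (p : Fin (L + 1) → Fin N) (j : Fin N) (k : ℕ) (hk : k ≤ L) :
    vtx N (L + 1) (Fin.snoc p j) k = vtx N L p k := by
  rw [vtx_eq N (L+1) _ k (by omega), vtx_eq N L p k hk]
  have h : (⟨k, by omega⟩ : Fin (L + 2)) = Fin.castSucc ⟨k, by omega⟩ := rfl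
  rw [h, Fin.snoc_castSucc]

lemma vtx_snoc_last (L : ℕ) (p : Fin (L + 1) → Fin N) (j : Fin N) :
    vtx N (L + 1) (Fin.snoc p j) (L + 1) = j := by
  rw [vtx_eq N (L+1) _ (L+1) (le_refl _)]
  have h : (⟨L + 1, by omega⟩ : Fin (L + 2)) = Fin.last (L + 1) := rfl
  rw [h, Fin.snoc_last]

lemma expansion (L : ℕ) (x : EI N → ℝ) (w : Fin N → ℝ) :
    ∑ p : Fin (L + 1) → Fin N,
        (∏ k ∈ Finset.range L, x (ed N L p k)) * w (vtx N L p L)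
      = ∑ i, (((Mm N x) ^ L) *ᵥ w) i := by
  induction L generalizing w with
  | zero =>
    rw [Fintype.sum_equiv (Equiv.funUnique (Fin 1) (Fin N)) _ (fun i => w i)
      (fun p => by simp [vtx, Equiv.funUnique])]
    simp
  | succ L ih =>
    have h1 : ∑ i, (((Mm N x) ^ (L + 1)) *ᵥ w) i
        = ∑ i, (((Mm N x) ^ L) *ᵥ ((Mm N x) *ᵥ w)) i := by
      rw [pow_succ, ← Matrix.mulVec_mulVec]
    rw [h1, ← ih ((Mm N x) *ᵥ w)]
    rw [← Equiv.sum_comp (snocE N L)]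
    rw [Fintype.sum_prod_type]
    apply Finset.sum_congr rfl
    intro p _
    have hmv : ((Mm N x) *ᵥ w) (vtx N L p L) = ∑ j, x (edg N (vtx N L p L) j) * w j := rfl
    rw [hmv, Finset.mul_sum]
    apply Finset.sum_congr rfl
    intro j _
    have hwt : ∏ k ∈ Finset.range (L + 1), x (ed N (L + 1) (snocE N L (p, j)) k)
        = (∏ k ∈ Finset.range L, x (ed N L p k)) * x (edg N (vtx N L p L) j) := by
      rw [Finset.prod_range_succ]
      congr 1
      · apply Finset.prod_congr rfl
        intro k hk
        rw [Finset.mem_range] at hk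
        unfold ed
        have e1 : vtx N (L+1) (snocE N L (p, j)) k = vtx N L p k :=
          vtx_snoc N L p j k (by omega)
        have e2 : vtx N (L+1) (snocE N L (p, j)) (k+1) = vtx N L p (k+1) :=
          vtx_snoc N L p j (k+1) (by omega)
        rw [show (snocE N L (p, j) : Fin (L+2) → Fin N) = Fin.snoc p j from rfl] at e1 e2 ⊢
        rw [e1, e2]
      · unfold ed
        rw [show (snocE N L (p, j) : Fin (L+2) → Fin N) = Fin.snoc p j from rfl]
        rw [vtx_snoc N L p j L (le_refl _), vtx_snoc_last N L p j]
    have hlast : vtx N (L+1) (snocE N L (p, j)) (L+1) = j := by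
      rw [show (snocE N L (p, j) : Fin (L+2) → Fin N) = Fin.snoc p j from rfl]
      exact vtx_snoc_last N L p j
    rw [hwt, hlast]
    ring

lemma integral_monomial {v : ℝ} (hv : 0 < v) (m : EI N → ℕ) :
    ∫ x : EI N → ℝ, ∏ e : EI N, (x e) ^ (m e)
        ∂(Measure.pi fun _ => gaussianReal 0 v.toNNReal)
      = ∏ e : EI N, Mo v (m e) := by
  letI : MeasureSpace ℝ := @MeasureSpace.mk ℝ Real.measurableSpace (gaussianReal 0 v.toNNReal)
  haveI : SigmaFinite (volume : Measure ℝ) := by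
    change SigmaFinite (gaussianReal 0 v.toNNReal)
    infer_instance
  have h := MeasureTheory.integral_fintype_prod_eq_prod (𝕜 := ℝ) (ι := EI N) (μ := fun _ => gaussianReal 0 v.toNNReal)
    (fun e (t : ℝ) => t ^ (m e))
  exact h

lemma integrable_monomial {v : ℝ} (hv : 0 < v) (m : EI N → ℕ) :
    Integrable (fun x : EI N → ℝ => ∏ e : EI N, (x e) ^ (m e))
      (Measure.pi fun _ => gaussianReal 0 v.toNNReal) := by
  letI : MeasureSpace ℝ := @MeasureSpace.mk ℝ Real.measurableSpace (gaussianReal 0 v.toNNReal)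
  haveI : SigmaFinite (volume : Measure ℝ) := by
    change SigmaFinite (gaussianReal 0 v.toNNReal)
    infer_instance
  exact MeasureTheory.Integrable.fintype_prod (f := fun e (t : ℝ) => t ^ (m e))
    fun e => Mo_integrable hv (m e)


/-! ### the maximal-multiplicity edge and the doubling injection -/

noncomputable def msup (L : ℕ) (p : Fin (L + 1) → Fin N) : ℕ :=
  Finset.univ.sup (mult N L p)

lemma mult_le_msup (L : ℕ) (p : Fin (L + 1) → Fin N) (e : EI N) :
    mult N L p e ≤ msup N L p :=
  Finset.le_sup (Finset.mem_univ e)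

lemma exists_max (hN : 0 < N) (L : ℕ) (hL : 0 < L) (p : Fin (L + 1) → Fin N) :
    ∃ k, k < L ∧ mult N L p (ed N L p k) = msup N L p := by
  have hne : (Finset.univ : Finset (EI N)).Nonempty :=
    ⟨⟨(⟨0, hN⟩, ⟨0, hN⟩), le_refl _⟩, Finset.mem_univ _⟩
  obtain ⟨e, -, he⟩ := Finset.exists_mem_eq_sup Finset.univ hne (mult N L p)
  have h0 : 1 ≤ mult N L p (ed N L p 0) := by
    unfold mult
    calc (1 : ℕ) = if ed N L p 0 = ed N L p 0 then 1 else 0 := by simp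
      _ ≤ _ := Finset.single_le_sum (f := fun k => if ed N L p k = ed N L p 0 then 1 else 0)
          (fun k _ => by positivity) (Finset.mem_range.2 hL)
  have hme : 1 ≤ mult N L p e := by
    rw [← he]
    exact le_trans h0 (mult_le_msup N L p _)
  have hk : ∃ k ∈ Finset.range L, ed N L p k = e := by
    by_contra hc
    push_neg at hc
    have : mult N L p e = 0 := by
      unfold mult
      apply Finset.sum_eq_zero
      intro k hk
      rw [if_neg (hc k hk)]
    omega
  obtain ⟨k, hk1, hk2⟩ := hk
  exact ⟨k, Finset.mem_range.1 hk1, by rw [hk2, ← he]; rfl⟩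

noncomputable def tstar (hN : 0 < N) (L : ℕ) (hL : 0 < L) (p : Fin (L + 1) → Fin N) : ℕ :=
  Nat.find (exists_max N hN L hL p)

lemma tstar_lt (hN : 0 < N) (L : ℕ) (hL : 0 < L) (p : Fin (L + 1) → Fin N) :
    tstar N hN L hL p < L := (Nat.find_spec (exists_max N hN L hL p)).1

lemma tstar_spec (hN : 0 < N) (L : ℕ) (hL : 0 < L) (p : Fin (L + 1) → Fin N) :
    mult N L p (ed N L p (tstar N hN L hL p)) = msup N L p :=
  (Nat.find_spec (exists_max N hN L hL p)).2

lemma tstar_min (hN : 0 < N) (L : ℕ) (hL : 0 < L) (p : Fin (L + 1) → Fin N)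
    (k : ℕ) (hk : k < tstar N hN L hL p) :
    ¬(k < L ∧ mult N L p (ed N L p k) = msup N L p) :=
  Nat.find_min (exists_max N hN L hL p) hk

noncomputable def iota (hN : 0 < N) (L : ℕ) (hL : 0 < L) (p : Fin (L + 1) → Fin N) :
    Fin (L + 3) → Fin N :=
  fun j =>
    if (j : ℕ) ≤ tstar N hN L hL p + 1 then vtx N L p j
    else if (j : ℕ) = tstar N hN L hL p + 2 then vtx N L p (tstar N hN L hL p)
    else vtx N L p ((j : ℕ) - 2)

lemma vtx_iota (hN : 0 < N) (L : ℕ) (hL : 0 < L) (p : Fin (L + 1) → Fin N)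
    (j : ℕ) (hj : j ≤ L + 2) :
    vtx N (L + 2) (iota N hN L hL p) j =
      if j ≤ tstar N hN L hL p + 1 then vtx N L p j
      else if j = tstar N hN L hL p + 2 then vtx N L p (tstar N hN L hL p)
      else vtx N L p (j - 2) := by
  rw [vtx_eq N (L + 2) _ j hj]
  rfl


lemma ed_iota (hN : 0 < N) (L : ℕ) (hL : 0 < L) (p : Fin (L + 1) → Fin N)
    (k : ℕ) (hk : k < L + 2) :
    ed N (L + 2) (iota N hN L hL p) k =
      if k ≤ tstar N hN L hL p then ed N L p k
      else if k ≤ tstar N hN L hL p + 2 then ed N L p (tstar N hN L hL p)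
      else ed N L p (k - 2) := by
  set t := tstar N hN L hL p with hts
  have ht : t < L := tstar_lt N hN L hL p
  unfold ed
  by_cases h1 : k ≤ t
  · have e1 : vtx N (L + 2) (iota N hN L hL p) k = vtx N L p k := by
      rw [vtx_iota N hN L hL p k (by omega), if_pos (by omega)]
    have e2 : vtx N (L + 2) (iota N hN L hL p) (k + 1) = vtx N L p (k + 1) := by
      rw [vtx_iota N hN L hL p (k + 1) (by omega), if_pos (by omega)]
    rw [e1, e2, if_pos h1]
  by_cases h2 : k = t + 1
  · subst h2
    have e1 : vtx N (L + 2) (iota N hN L hL p) (t + 1) = vtx N L p (t + 1) := by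
      rw [vtx_iota N hN L hL p (t + 1) (by omega), if_pos (by omega)]
    have e2 : vtx N (L + 2) (iota N hN L hL p) (t + 1 + 1) = vtx N L p t := by
      rw [vtx_iota N hN L hL p (t + 1 + 1) (by omega), if_neg (by omega), if_pos (by omega)]
    rw [e1, e2, if_neg h1, if_pos (by omega)]
    exact edg_symm N _ _
  by_cases h3 : k = t + 2
  · subst h3
    have e1 : vtx N (L + 2) (iota N hN L hL p) (t + 2) = vtx N L p t := by
      rw [vtx_iota N hN L hL p (t + 2) (by omega), if_neg (by omega), if_pos (by omega)]
    have e2 : vtx N (L + 2) (iota N hN L hL p) (t + 2 + 1) = vtx N L p (t + 1) := by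
      rw [vtx_iota N hN L hL p (t + 2 + 1) (by omega), if_neg (by omega), if_neg (by omega)]
      congr 1 <;> omega
    rw [e1, e2, if_neg h1, if_pos (by omega)]
  · have h4 : t + 3 ≤ k := by omega
    have e1 : vtx N (L + 2) (iota N hN L hL p) k = vtx N L p (k - 2) := by
      rw [vtx_iota N hN L hL p k (by omega), if_neg (by omega), if_neg (by omega)]
    have e2 : vtx N (L + 2) (iota N hN L hL p) (k + 1) = vtx N L p (k - 2 + 1) := by
      rw [vtx_iota N hN L hL p (k + 1) (by omega), if_neg (by omega), if_neg (by omega)]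
      congr 1
      omega
    rw [e1, e2, if_neg h1, if_neg (by omega)]

lemma sum_split (f : ℕ → ℕ) (t L : ℕ) (ht : t < L) :
    ∑ k ∈ Finset.range (L + 2), f k
      = ∑ k ∈ Finset.range (t + 1), f k + (f (t + 1) + f (t + 2))
        + ∑ i ∈ Finset.range (L - (t + 1)), f (t + 3 + i) := by
  have h : L + 2 = (t + 1) + (2 + (L - (t + 1))) := by omega
  rw [h, Finset.sum_range_add]
  have h4 : ∑ x ∈ Finset.range (2 + (L - (t + 1))), f (t + 1 + x)
      = (∑ x ∈ Finset.range 2, f (t + 1 + x))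
        + ∑ x ∈ Finset.range (L - (t + 1)), f (t + 1 + (2 + x)) :=
    Finset.sum_range_add _ 2 _
  rw [h4]
  have h5 : ∑ x ∈ Finset.range 2, f (t + 1 + x) = f (t + 1) + f (t + 2) := by
    rw [Finset.sum_range_succ, Finset.sum_range_one]
  have h3 : ∑ i ∈ Finset.range (L - (t + 1)), f (t + 1 + (2 + i))
      = ∑ i ∈ Finset.range (L - (t + 1)), f (t + 3 + i) := by
    apply Finset.sum_congr rfl
    intro i _
    congr 1
    omega
  rw [h5, h3]
  ring

lemma sum_split0 (f : ℕ → ℕ) (t L : ℕ) (ht : t < L) :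
    ∑ k ∈ Finset.range L, f k
      = ∑ k ∈ Finset.range (t + 1), f k
        + ∑ i ∈ Finset.range (L - (t + 1)), f (t + 1 + i) := by
  have h := Finset.sum_range_add f (t + 1) (L - (t + 1))
  rw [show (t + 1) + (L - (t + 1)) = L by omega] at h
  exact h

lemma mult_iota (hN : 0 < N) (L : ℕ) (hL : 0 < L) (p : Fin (L + 1) → Fin N) (e : EI N) :
    mult N (L + 2) (iota N hN L hL p) e =
      mult N L p e + if ed N L p (tstar N hN L hL p) = e then 2 else 0 := by
  set t := tstar N hN L hL p with hts
  have ht : t < L := tstar_lt N hN L hL p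
  have hcong : mult N (L + 2) (iota N hN L hL p) e
      = ∑ k ∈ Finset.range (L + 2),
          (if (if k ≤ t then ed N L p k
            else if k ≤ t + 2 then ed N L p t
            else ed N L p (k - 2)) = e then 1 else 0) := by
    unfold mult
    apply Finset.sum_congr rfl
    intro k hk
    rw [ed_iota N hN L hL p k (Finset.mem_range.1 hk)]
  rw [hcong, sum_split _ t L ht]
  have hA : ∑ k ∈ Finset.range (t + 1),
        (if (if k ≤ t then ed N L p k
          else if k ≤ t + 2 then ed N L p t
          else ed N L p (k - 2)) = e then 1 else 0)
      = ∑ k ∈ Finset.range (t + 1), (if ed N L p k = e then 1 else 0) := by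
    apply Finset.sum_congr rfl
    intro k hk
    rw [Finset.mem_range] at hk
    rw [if_pos (show k ≤ t by omega)]
  have hB1 : (if (if t + 1 ≤ t then ed N L p (t + 1)
      else if t + 1 ≤ t + 2 then ed N L p t
      else ed N L p (t + 1 - 2)) = e then 1 else 0)
      = (if ed N L p t = e then 1 else 0) := by
    rw [if_neg (show ¬ (t + 1 ≤ t) by omega), if_pos (show t + 1 ≤ t + 2 by omega)]
  have hB2 : (if (if t + 2 ≤ t then ed N L p (t + 2)
      else if t + 2 ≤ t + 2 then ed N L p t
      else ed N L p (t + 2 - 2)) = e then 1 else 0)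
      = (if ed N L p t = e then 1 else 0) := by
    rw [if_neg (show ¬ (t + 2 ≤ t) by omega), if_pos (show t + 2 ≤ t + 2 by omega)]
  have hC : ∑ i ∈ Finset.range (L - (t + 1)),
        (if (if t + 3 + i ≤ t then ed N L p (t + 3 + i)
          else if t + 3 + i ≤ t + 2 then ed N L p t
          else ed N L p (t + 3 + i - 2)) = e then 1 else 0)
      = ∑ i ∈ Finset.range (L - (t + 1)), (if ed N L p (t + 1 + i) = e then 1 else 0) := by
    apply Finset.sum_congr rfl
    intro i _
    rw [if_neg (show ¬ (t + 3 + i ≤ t) by omega), if_neg (show ¬ (t + 3 + i ≤ t + 2) by omega),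
      show t + 3 + i - 2 = t + 1 + i from by omega]
  rw [hA, hB1, hB2, hC]
  rw [show mult N L p e = ∑ k ∈ Finset.range L, (if ed N L p k = e then 1 else 0) from rfl,
    sum_split0 _ t L ht]
  split <;> omega


lemma msup_iota (hN : 0 < N) (L : ℕ) (hL : 0 < L) (p : Fin (L + 1) → Fin N) :
    msup N (L + 2) (iota N hN L hL p) = msup N L p + 2 := by
  apply le_antisymm
  · apply Finset.sup_le
    intro e _
    rw [mult_iota N hN L hL p e]
    have h1 := mult_le_msup N L p e
    split <;> omega
  · have h := mult_le_msup N (L + 2) (iota N hN L hL p) (ed N L p (tstar N hN L hL p))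
    rw [mult_iota N hN L hL p, if_pos rfl, tstar_spec N hN L hL p] at h
    exact h

lemma tstar_iota (hN : 0 < N) (L : ℕ) (hL : 0 < L) (p : Fin (L + 1) → Fin N) :
    tstar N hN (L + 2) (by omega) (iota N hN L hL p) = tstar N hN L hL p := by
  set t := tstar N hN L hL p with hts
  have ht : t < L := tstar_lt N hN L hL p
  rw [tstar, Nat.find_eq_iff]
  constructor
  · refine ⟨by omega, ?_⟩
    rw [ed_iota N hN L hL p t (by omega), if_pos (le_refl t)]
    rw [mult_iota N hN L hL p, if_pos rfl, tstar_spec N hN L hL p,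
      msup_iota N hN L hL p]
  · intro k hk
    rintro ⟨hk2, hk3⟩
    rw [ed_iota N hN L hL p k (by omega), if_pos (show k ≤ t by omega)] at hk3
    rw [mult_iota N hN L hL p, msup_iota N hN L hL p] at hk3
    by_cases he : ed N L p t = ed N L p k
    · have h5 : mult N L p (ed N L p k) = msup N L p := by
        rw [← he, tstar_spec N hN L hL p]
      exact tstar_min N hN L hL p k hk ⟨by omega, h5⟩
    · rw [if_neg he] at hk3
      have := mult_le_msup N L p (ed N L p k)
      omega

lemma iota_injective (hN : 0 < N) (L : ℕ) (hL : 0 < L)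
    (p p' : Fin (L + 1) → Fin N) (h : iota N hN L hL p = iota N hN L hL p') : p = p' := by
  have htt : tstar N hN L hL p = tstar N hN L hL p' := by
    have h1 := tstar_iota N hN L hL p
    have h2 := tstar_iota N hN L hL p'
    rw [← h1, ← h2, h]
  have ht : tstar N hN L hL p < L := tstar_lt N hN L hL p
  have hvtx : ∀ j : ℕ, j ≤ L → vtx N L p j = vtx N L p' j := by
    intro j hj
    by_cases hjt : j ≤ tstar N hN L hL p + 1
    · have hjt' : j ≤ tstar N hN L hL p' + 1 := by rw [← htt]; exact hjt
      have e1 : vtx N (L + 2) (iota N hN L hL p) j = vtx N L p j := by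
        rw [vtx_iota N hN L hL p j (by omega), if_pos hjt]
      have e2 : vtx N (L + 2) (iota N hN L hL p') j = vtx N L p' j := by
        rw [vtx_iota N hN L hL p' j (by omega), if_pos hjt']
      rw [← e1, ← e2, h]
    · have hjt' : ¬ j ≤ tstar N hN L hL p' + 1 := by rw [← htt]; exact hjt
      have e1 : vtx N (L + 2) (iota N hN L hL p) (j + 2) = vtx N L p j := by
        rw [vtx_iota N hN L hL p (j + 2) (by omega),
          if_neg (show ¬ (j + 2 ≤ tstar N hN L hL p + 1) by omega),
          if_neg (show ¬ (j + 2 = tstar N hN L hL p + 2) by omega)]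
        congr 1 <;> omega
      have e2 : vtx N (L + 2) (iota N hN L hL p') (j + 2) = vtx N L p' j := by
        rw [vtx_iota N hN L hL p' (j + 2) (by omega),
          if_neg (show ¬ (j + 2 ≤ tstar N hN L hL p' + 1) by omega),
          if_neg (show ¬ (j + 2 = tstar N hN L hL p' + 2) by omega)]
        congr 1 <;> omega
      rw [← e1, ← e2, h]
  funext j
  have hj := hvtx j (by omega)
  rw [vtx_eq N L p j (by omega), vtx_eq N L p' j (by omega)] at hj
  simpa using hj

lemma tm_iota {v : ℝ} (hv : 0 < v) (hN : 0 < N) (L : ℕ) (hL : 0 < L)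
    (p : Fin (L + 1) → Fin N) :
    tm N v (L + 2) (iota N hN L hL p) = ((msup N L p : ℝ) + 1) * v * tm N v L p := by
  set estar := ed N L p (tstar N hN L hL p) with hes
  unfold tm
  rw [← Finset.mul_prod_erase Finset.univ _ (Finset.mem_univ estar)]
  rw [← Finset.mul_prod_erase Finset.univ (fun e => Mo v (mult N L p e))
    (Finset.mem_univ estar)]
  have h1 : mult N (L + 2) (iota N hN L hL p) estar = mult N L p estar + 2 := by
    rw [mult_iota N hN L hL p, if_pos rfl]
  have h2 : ∀ e ∈ Finset.univ.erase estar,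
      Mo v (mult N (L + 2) (iota N hN L hL p) e) = Mo v (mult N L p e) := by
    intro e he
    rw [mult_iota N hN L hL p, if_neg (Finset.ne_of_mem_erase he).symm, Nat.add_zero]
  rw [Finset.prod_congr rfl h2, h1, Mo_rec hv, tstar_spec N hN L hL p]
  ring

lemma msup_lower (hN : 0 < N) (L : ℕ) (p : Fin (L + 1) → Fin N) :
    L ≤ Fintype.card (EI N) * msup N L p := by
  calc L = ∑ e : EI N, mult N L p e := (sum_mult N L p).symm
    _ ≤ ∑ _e : EI N, msup N L p :=
        Finset.sum_le_sum fun e _ => mult_le_msup N L p e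
    _ = Fintype.card (EI N) * msup N L p := by
        rw [Finset.sum_const, smul_eq_mul, Fintype.card]


def iota0 (p : Fin 1 → Fin N) : Fin 3 → Fin N := fun _ => p 0

lemma iota0_injective (p p' : Fin 1 → Fin N) (h : iota0 N p = iota0 N p') : p = p' := by
  funext j
  have h0 : p 0 = p' 0 := congrFun h 0
  have hj : j = 0 := Subsingleton.elim j 0
  rw [hj, h0]

lemma tm_zero {v : ℝ} (hv : 0 < v) (p : Fin 1 → Fin N) : tm N v 0 p = 1 := by
  unfold tm mult
  simp [Mo_zero hv]

lemma tm_iota0 {v : ℝ} (hv : 0 < v) (p : Fin 1 → Fin N) : tm N v 2 (iota0 N p) = v := by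
  have hm : ∀ e : EI N, mult N 2 (iota0 N p) e
      = if edg N (p 0) (p 0) = e then 2 else 0 := by
    intro e
    have hed : ∀ k : ℕ, ed N 2 (iota0 N p) k = edg N (p 0) (p 0) := fun k => rfl
    unfold mult
    rw [Finset.sum_range_succ, Finset.sum_range_succ, Finset.sum_range_zero, hed, hed]
    split <;> omega
  unfold tm
  rw [Finset.prod_congr rfl (fun e _ => by rw [hm e])]
  rw [← Finset.mul_prod_erase Finset.univ _ (Finset.mem_univ (edg N (p 0) (p 0)))]
  rw [if_pos rfl]
  have h2 : ∀ e ∈ Finset.univ.erase (edg N (p 0) (p 0)),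
      Mo v (if edg N (p 0) (p 0) = e then 2 else 0) = 1 := by
    intro e he
    rw [if_neg (Finset.ne_of_mem_erase he).symm, Mo_zero hv]
  rw [Finset.prod_congr rfl h2, Finset.prod_const_one]
  have := Mo_rec hv 0
  rw [Mo_zero hv] at this
  rw [this]
  norm_num

lemma sum_comparison {v : ℝ} (hv : 0 < v) (L M' : ℕ)
    (ι : (Fin (L + 1) → Fin N) → (Fin (M' + 1) → Fin N))
    (hinj : ∀ p p', ι p = ι p' → p = p') (c : ℝ)
    (hc : ∀ p, c * tm N v L p ≤ tm N v M' (ι p)) :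
    c * ∑ p : Fin (L + 1) → Fin N, tm N v L p
      ≤ ∑ q : Fin (M' + 1) → Fin N, tm N v M' q := by
  rw [Finset.mul_sum]
  calc ∑ p : Fin (L + 1) → Fin N, c * tm N v L p
      ≤ ∑ p : Fin (L + 1) → Fin N, tm N v M' (ι p) :=
        Finset.sum_le_sum fun p _ => hc p
    _ = ∑ q ∈ Finset.univ.image ι, tm N v M' q :=
        (Finset.sum_image fun p _ p' _ h => hinj p p' h).symm
    _ ≤ ∑ q : Fin (M' + 1) → Fin N, tm N v M' q :=
        Finset.sum_le_sum_of_subset_of_nonneg (Finset.subset_univ _)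
          (fun q _ _ => tm_nonneg N hv M' q)

lemma card_EI_real (hN : 0 < N) :
    (Fintype.card (EI N) : ℝ) = (N : ℝ) * ((N : ℝ) + 1) / 2 := by
  have h := card_EI N
  have h2 : ((2 * Fintype.card (EI N) : ℕ) : ℝ) = ((N * (N + 1) : ℕ) : ℝ) := by rw [h]
  push_cast at h2
  linarith

lemma key_step {v : ℝ} (hv : 0 < v) (hN : 0 < N) (L : ℕ) :
    v * ((L : ℝ) / ((N : ℝ) * ((N : ℝ) + 1) / 2) + 1)
        * ∑ p : Fin (L + 1) → Fin N, tm N v L p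
      ≤ ∑ q : Fin (L + 3) → Fin N, tm N v (L + 2) q := by
  have hD : (0 : ℝ) < (N : ℝ) * ((N : ℝ) + 1) / 2 := by
    have : (1 : ℝ) ≤ (N : ℝ) := by exact_mod_cast hN
    nlinarith
  rcases Nat.eq_zero_or_pos L with rfl | hL
  · refine sum_comparison N hv 0 2 (iota0 N) (iota0_injective N) _ fun p => ?_
    rw [tm_zero N hv p, tm_iota0 N hv p]
    simp
  · refine sum_comparison N hv L (L + 2) (iota N hN L hL) (iota_injective N hN L hL) _
      fun p => ?_
    rw [tm_iota N hv hN L hL p]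
    apply mul_le_mul_of_nonneg_right _ (tm_nonneg N hv L p)
    have hcard : (L : ℝ) ≤ ((N : ℝ) * ((N : ℝ) + 1) / 2) * (msup N L p : ℝ) := by
      have h1 := msup_lower N hN L p
      have h2 : ((L : ℕ) : ℝ) ≤ ((Fintype.card (EI N) * msup N L p : ℕ) : ℝ) := by
        exact_mod_cast h1
      push_cast at h2
      rw [card_EI_real N hN] at h2
      linarith
    have hdiv : (L : ℝ) / ((N : ℝ) * ((N : ℝ) + 1) / 2) ≤ (msup N L p : ℝ) :=
      (div_le_iff₀ hD).2 (by linarith)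
    nlinarith [hv.le]

lemma integral_eq_sum {v : ℝ} (hv : 0 < v) (L : ℕ) :
    ∫ x : EI N → ℝ, (∑ i, (((Mm N x) ^ L) *ᵥ (fun _ => (1 : ℝ))) i)
        ∂(Measure.pi fun _ => gaussianReal 0 v.toNNReal)
      = ∑ p : Fin (L + 1) → Fin N, tm N v L p := by
  have hpt : ∀ x : EI N → ℝ, ∑ i, (((Mm N x) ^ L) *ᵥ (fun _ => (1 : ℝ))) i
      = ∑ p : Fin (L + 1) → Fin N, ∏ e : EI N, (x e) ^ (mult N L p e) := by
    intro x
    rw [← expansion N L x (fun _ => 1)]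
    apply Finset.sum_congr rfl
    intro p _
    rw [mul_one, wt_eq_monomial]
  rw [integral_congr_ae (Filter.Eventually.of_forall hpt)]
  rw [integral_finset_sum Finset.univ (fun p _ => integrable_monomial N hv _)]
  apply Finset.sum_congr rfl
  intro p _
  rw [integral_monomial N hv]
  rfl


lemma symm_dot (A : Matrix (Fin N) (Fin N) ℝ) (hA : A.IsSymm) (l₁ l₂ : ℕ) (u : Fin N → ℝ) :
    ∑ i, ((A ^ l₁) *ᵥ u) i * ((A ^ l₂) *ᵥ u) i
      = ∑ i, u i * ((A ^ (l₁ + l₂)) *ᵥ u) i := by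
  have hpow : (A ^ l₁)ᵀ = A ^ l₁ := by
    rw [Matrix.transpose_pow, hA]
  have h1 : ∑ i, u i * ((A ^ (l₁ + l₂)) *ᵥ u) i = u ⬝ᵥ ((A ^ (l₁ + l₂)) *ᵥ u) := rfl
  have h2 : ∑ i, ((A ^ l₁) *ᵥ u) i * ((A ^ l₂) *ᵥ u) i
      = ((A ^ l₁) *ᵥ u) ⬝ᵥ ((A ^ l₂) *ᵥ u) := rfl
  rw [h1, h2]
  calc (A ^ l₁ *ᵥ u) ⬝ᵥ (A ^ l₂ *ᵥ u)
      = (u ᵥ* A ^ l₁) ⬝ᵥ (A ^ l₂ *ᵥ u) := by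
        rw [← Matrix.mulVec_transpose (A ^ l₁) u, hpow]
    _ = u ⬝ᵥ (A ^ l₁ *ᵥ (A ^ l₂ *ᵥ u)) :=
        (Matrix.dotProduct_mulVec u (A ^ l₁) (A ^ l₂ *ᵥ u)).symm
    _ = u ⬝ᵥ (A ^ (l₁ + l₂) *ᵥ u) := by rw [Matrix.mulVec_mulVec, ← pow_add]

end Stmt11Aux

open Stmt11Aux

theorem stmt11 {Ω : Type*} [MeasurableSpace Ω] (μ : Measure Ω) [IsProbabilityMeasure μ]
    (N : ℕ) (hN : 0 < N) (σ : ℝ) (hσ : 0 < σ)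
    (W : Ω → Matrix (Fin N) (Fin N) ℝ)
    (hWmeas : ∀ i j, Measurable fun ω => W ω i j)
    (hsym : ∀ ω, (W ω).IsSymm)
    (hlaw : Measure.map
        (fun ω => fun p : {p : Fin N × Fin N // p.1 ≤ p.2} => W ω p.1.1 p.1.2) μ
      = Measure.pi fun _ => gaussianReal 0 (Real.toNNReal (σ ^ 2)))
    (T : ℕ)
    (u : Fin N → ℝ) (hu : u = fun _ => 1)
    (Bf : ℕ → ℕ → ℝ)
    (hBdef : ∀ l₁ l₂ : ℕ,
      Bf l₁ l₂ = ∫ ω, ∑ i, ((W ω ^ l₁) *ᵥ u) i * ((W ω ^ l₂) *ᵥ u) i ∂μ) :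
    ∀ l₁ l₂ : ℕ, l₁ < T → l₂ < T →
      Bf l₁ l₂ ≤ (1 / σ ^ 2) *
        (1 / (((l₁ : ℝ) + (l₂ : ℝ)) / ((N : ℝ) * ((N : ℝ) + 1) / 2) + 1)) *
        Bf (l₁ + 1) (l₂ + 1) := by
  subst hu
  have hv : (0 : ℝ) < σ ^ 2 := by positivity
  set φ : Ω → (EI N → ℝ) := fun ω => fun p : EI N => W ω p.1.1 p.1.2 with hφdef
  have hφmeas : Measurable φ :=
    measurable_pi_lambda _ fun p => hWmeas p.1.1 p.1.2
  have hMm : ∀ ω, Mm N (φ ω) = W ω := by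
    intro ω
    ext i j
    show φ ω (edg N i j) = W ω i j
    unfold edg
    by_cases h : i ≤ j
    · rw [dif_pos h]
    · rw [dif_neg h]
      show W ω j i = W ω i j
      have := congrFun (congrFun (hsym ω) i) j
      rwa [Matrix.transpose_apply] at this
  have hBsum : ∀ l₁ l₂ : ℕ,
      Bf l₁ l₂ = ∑ p : Fin ((l₁ + l₂) + 1) → Fin N, tm N (σ ^ 2) (l₁ + l₂) p := by
    intro l₁ l₂
    rw [hBdef]
    have hpt : ∀ ω, ∑ i, ((W ω ^ l₁) *ᵥ (fun _ => (1:ℝ))) i * ((W ω ^ l₂) *ᵥ (fun _ => (1:ℝ))) i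
        = ∑ i, (((Mm N (φ ω)) ^ (l₁ + l₂)) *ᵥ (fun _ => (1:ℝ))) i := by
      intro ω
      rw [symm_dot N (W ω) (hsym ω) l₁ l₂]
      rw [hMm ω]
      simp
    rw [integral_congr_ae (Filter.Eventually.of_forall hpt)]
    have hF : Continuous fun x : EI N → ℝ => ∑ i, (((Mm N x) ^ (l₁ + l₂)) *ᵥ (fun _ => (1:ℝ))) i :=
      continuous_finset_sum _ fun i _ => Mm_continuous N (l₁ + l₂) _ i
    have hmap : ∫ ω, (fun x : EI N → ℝ =>
          ∑ i, (((Mm N x) ^ (l₁ + l₂)) *ᵥ (fun _ => (1:ℝ))) i) (φ ω) ∂μ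
        = ∫ x, (∑ i, (((Mm N x) ^ (l₁ + l₂)) *ᵥ (fun _ => (1:ℝ))) i)
            ∂(Measure.map φ μ) :=
      (integral_map hφmeas.aemeasurable hF.aestronglyMeasurable).symm
    rw [show (fun ω => ∑ i, (((Mm N (φ ω)) ^ (l₁ + l₂)) *ᵥ (fun _ => (1:ℝ))) i)
        = fun ω => (fun x : EI N → ℝ =>
            ∑ i, (((Mm N x) ^ (l₁ + l₂)) *ᵥ (fun _ => (1:ℝ))) i) (φ ω) from rfl]
    rw [hmap, hφdef, hlaw]
    exact integral_eq_sum N hv (l₁ + l₂)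
  intro l₁ l₂ _ _
  set L := l₁ + l₂ with hL
  have hD : (0 : ℝ) < (N : ℝ) * ((N : ℝ) + 1) / 2 := by
    have : (1 : ℝ) ≤ (N : ℝ) := by exact_mod_cast hN
    nlinarith
  have hkey := key_step N hv hN L
  have hB1 : Bf l₁ l₂ = ∑ p : Fin (L + 1) → Fin N, tm N (σ ^ 2) L p := hBsum l₁ l₂
  have hB2 : Bf (l₁ + 1) (l₂ + 1) = ∑ q : Fin (L + 3) → Fin N, tm N (σ ^ 2) (L + 2) q := by
    have h := hBsum (l₁ + 1) (l₂ + 1)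
    rw [show l₁ + 1 + (l₂ + 1) = L + 2 from by omega] at h
    exact h
  rw [hB1, hB2]
  have hcast : ((L : ℕ) : ℝ) = (l₁ : ℝ) + (l₂ : ℝ) := by push_cast [hL]; ring
  rw [← hcast]
  set D := (N : ℝ) * ((N : ℝ) + 1) / 2 with hDdef
  have hc : (0 : ℝ) < (L : ℝ) / D + 1 := by positivity
  set bL := ∑ p : Fin (L + 1) → Fin N, tm N (σ ^ 2) L p with hbL
  set bL2 := ∑ q : Fin (L + 3) → Fin N, tm N (σ ^ 2) (L + 2) q with hbL2
  have hgoal : (1 / σ ^ 2) * (1 / ((L : ℝ) / D + 1)) * bL2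
      = bL2 / (σ ^ 2 * ((L : ℝ) / D + 1)) := by
    field_simp
  rw [hgoal, le_div_iff₀ (by positivity)]
  nlinarith [hkey]
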